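/- Let T be a bounded operator on ℓ_2 and let u ∈ ℓ_2 be a norming vector for T. Then T*Tu = ‖T‖² u, where T* is the Hilbert-space adjoint of T. In particular, if the set 𝒩(T) of norming vectors for T is nonempty, then 𝒩(T) ∪ {0} is a linear subspace of ℓ_2 (i.e. u + v ∈ 𝒩(T) ∪ {0} and λu ∈ 𝒩(T) ∪ {0} for all u, v ∈ 𝒩(T) and all λ ∈ ℂ). -/

import Mathlib

open scoped ENNReal

noncomputable section

set_option maxHeartbeats 1000000
set_option synthInstance.maxHeartbeats 200000

/-- The Hilbert space `ℓ₂` of square-summable complex sequences. -/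
abbrev L2 := lp (fun _ : ℕ => ℂ) 2

/-- The set `𝒩(T)` of norming vectors for a bounded operator `T` on `ℓ₂`:
nonzero vectors `x` with `‖Tx‖ = ‖T‖·‖x‖`. -/
def NormingSet (T : L2 →L[ℂ] L2) : Set L2 :=
  {x | x ≠ 0 ∧ ‖T x‖ = ‖T‖ * ‖x‖}

open ContinuousLinearMap in
lemma norming_key (T : L2 →L[ℂ] L2) (u : L2) (hu : u ∈ NormingSet T) :
    (ContinuousLinearMap.adjoint T) (T u) = ((‖T‖ ^ 2 : ℝ) : ℂ) • u := by
  obtain ⟨hu0, hnorm⟩ := hu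
  set x := (ContinuousLinearMap.adjoint T) (T u) with hx
  set y : L2 := ((‖T‖ ^ 2 : ℝ) : ℂ) • u with hy
  have hre : RCLike.re (inner ℂ x u : ℂ) = ‖T u‖ ^ 2 := by
    rw [hx, ContinuousLinearMap.adjoint_inner_left]
    exact inner_self_eq_norm_sq _
  have hadj : ‖ContinuousLinearMap.adjoint T‖ = ‖T‖ :=
    ContinuousLinearMap.adjoint.norm_map T
  have hxnorm : ‖x‖ ≤ ‖T‖ ^ 2 * ‖u‖ := by
    calc ‖x‖ ≤ ‖ContinuousLinearMap.adjoint T‖ * ‖T u‖ := le_opNorm _ _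
    _ = ‖T‖ * (‖T‖ * ‖u‖) := by rw [hadj, hnorm]
    _ = ‖T‖ ^ 2 * ‖u‖ := by ring
  have hynorm : ‖y‖ = ‖T‖ ^ 2 * ‖u‖ := by
    rw [hy, norm_smul, Complex.norm_real, Real.norm_eq_abs,
      abs_of_nonneg (sq_nonneg ‖T‖)]
  have hrexy : RCLike.re (inner ℂ x y : ℂ) = ‖T‖ ^ 2 * ‖T u‖ ^ 2 := by
    have hco : ((‖T‖ ^ 2 : ℝ) : ℂ) = RCLike.ofReal (K := ℂ) (‖T‖ ^ 2) := rfl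
    rw [hy, hco, inner_smul_real_right, RCLike.smul_re, hre]
  have hsq : ‖x - y‖ ^ 2 ≤ 0 := by
    have hns := @norm_sub_sq ℂ _ _ _ _ x y
    rw [hns, hrexy, hynorm]
    have h1 : ‖x‖ ^ 2 ≤ (‖T‖ ^ 2 * ‖u‖) ^ 2 :=
      pow_le_pow_left₀ (norm_nonneg _) hxnorm 2
    have key : ‖T‖ ^ 2 * ‖T u‖ ^ 2 = (‖T‖ ^ 2 * ‖u‖) ^ 2 := by rw [hnorm]; ring
    linarith
  have h0 : x - y = 0 :=
    norm_eq_zero.mp (sq_eq_zero_iff.mp (le_antisymm hsq (sq_nonneg _)))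
  exact sub_eq_zero.mp h0

open ContinuousLinearMap in
lemma norming_of_eigen (T : L2 →L[ℂ] L2) (x : L2)
    (hx : (ContinuousLinearMap.adjoint T) (T x) = ((‖T‖ ^ 2 : ℝ) : ℂ) • x) :
    ‖T x‖ = ‖T‖ * ‖x‖ := by
  have h2 : RCLike.re (inner ℂ ((ContinuousLinearMap.adjoint T) (T x)) x : ℂ) = ‖T x‖ ^ 2 := by
    rw [ContinuousLinearMap.adjoint_inner_left]
    exact inner_self_eq_norm_sq _
  have hco : ((‖T‖ ^ 2 : ℝ) : ℂ) = RCLike.ofReal (K := ℂ) (‖T‖ ^ 2) := rfl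
  rw [hx, hco, inner_smul_real_left, RCLike.smul_re, inner_self_eq_norm_sq] at h2
  have hnn : 0 ≤ ‖T‖ * ‖x‖ := mul_nonneg (norm_nonneg _) (norm_nonneg _)
  nlinarith [norm_nonneg (T x)]

/-- Let `T` be a bounded operator on `ℓ₂` and let `u ∈ ℓ₂` be a norming
vector for `T`.  Then `T*Tu = ‖T‖² u`.  In particular, if `𝒩(T) ≠ ∅` then
`𝒩(T) ∪ {0}` is a linear subspace of `ℓ₂`: it is closed under addition and under
scalar multiplication. -/
theorem adjoint_comp_apply_of_norming (T : L2 →L[ℂ] L2) (u : L2) (hu : u ∈ NormingSet T) :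
    (ContinuousLinearMap.adjoint T) (T u) = ((‖T‖ ^ 2 : ℝ) : ℂ) • u ∧
    (∀ v w : L2, v ∈ NormingSet T → w ∈ NormingSet T → v + w ∈ NormingSet T ∪ {0}) ∧
    (∀ v : L2, v ∈ NormingSet T → ∀ c : ℂ, c • v ∈ NormingSet T ∪ {0}) := by
  refine ⟨norming_key T u hu, ?_, ?_⟩
  · intro v w hv hw
    by_cases hvw : v + w = 0
    · right; exact hvw
    · left
      refine ⟨hvw, norming_of_eigen T (v + w) ?_⟩
      have h1 := norming_key T v hv
      have h2 := norming_key T w hw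
      simp only [map_add, h1, h2, smul_add]
  · intro v hv c
    by_cases hc : c = 0
    · right; simp [hc]
    · left
      refine ⟨smul_ne_zero hc hv.1, ?_⟩
      rw [map_smul, norm_smul, norm_smul, hv.2]
      ring
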